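/- Let m be a deficient natural number and p a prime such that p^α exactly divides m for some α ≥ 1. Then m·p is primitive abundant if and only if (as inequalities of rationals): p·σ(p^α) < c(m), and p·σ(p^α) > σ(m) / (d(m) + 2m/(σ(q^β) − 1)) for every prime power q^β exactly dividing m with q ≠ p (β ≥ 1). -/

import Mathlib

/-- The sum of all divisors of `n`. -/
def sigma1 (n : ℕ) : ℕ := ∑ d ∈ n.divisors, d

/-- `n` is abundant if `σ(n) > 2n`. -/
def Abundant (n : ℕ) : Prop := 2 * n < sigma1 n

/-- `n` is deficient if `σ(n) < 2n`. -/
def Deficient (n : ℕ) : Prop := sigma1 n < 2 * n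

/-- A primitive abundant number: abundant and all proper divisors deficient. -/
def PrimitiveAbundant (n : ℕ) : Prop :=
  Abundant n ∧ ∀ d ∈ n.properDivisors, Deficient d

/-- The center of a deficient number `m`: `c(m) = σ(m)/d(m)` where `d(m) = 2m - σ(m)`. -/
def center (n : ℕ) : ℚ := (sigma1 n : ℚ) / (2 * (n : ℚ) - (sigma1 n : ℚ))

lemma sigma1_mul {a b : ℕ} (h : a.Coprime b) : sigma1 (a * b) = sigma1 a * sigma1 b :=
  h.sum_divisors_mul

lemma sigma1_prime_pow_succ {p : ℕ} (hp : p.Prime) (n : ℕ) :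
    sigma1 (p ^ (n + 1)) = p * sigma1 (p ^ n) + 1 := by
  unfold sigma1
  rw [← ArithmeticFunction.sigma_one_apply, ← ArithmeticFunction.sigma_one_apply,
    ArithmeticFunction.sigma_one_apply_prime_pow hp, ArithmeticFunction.sigma_one_apply_prime_pow hp,
    geom_sum_succ]

lemma le_sigma1 {n : ℕ} (hn : n ≠ 0) : n ≤ sigma1 n :=
  Finset.single_le_sum (fun d _ => Nat.zero_le d) (Nat.mem_divisors_self n hn)

lemma sigma1_pos {n : ℕ} (hn : n ≠ 0) : 0 < sigma1 n :=
  lt_of_lt_of_le (Nat.pos_of_ne_zero hn) (le_sigma1 hn)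

lemma sigma1_mul_le {d n : ℕ} (hd : d ∣ n) (hn : n ≠ 0) : sigma1 d * n ≤ sigma1 n * d := by
  obtain ⟨c, rfl⟩ := hd
  have hd0 : d ≠ 0 := fun h => hn (by simp [h])
  have hc0 : c ≠ 0 := fun h => hn (by simp [h])
  have key : sigma1 d * c ≤ sigma1 (d * c) := by
    unfold sigma1
    rw [Finset.sum_mul]
    have himg : (∑ x ∈ d.divisors.image (fun e => e * c), x) = ∑ i ∈ d.divisors, i * c :=
      Finset.sum_image (by intro x _ y _ h; exact Nat.eq_of_mul_eq_mul_right (Nat.pos_of_ne_zero hc0) h)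
    rw [← himg]
    apply Finset.sum_le_sum_of_subset
    intro x hx
    simp only [Finset.mem_image] at hx
    obtain ⟨e, he, rfl⟩ := hx
    rw [Nat.mem_divisors] at he ⊢
    exact ⟨mul_dvd_mul he.1 dvd_rfl, hn⟩
  calc sigma1 d * (d * c) = sigma1 d * c * d := by ring
    _ ≤ sigma1 (d * c) * d := Nat.mul_le_mul_right _ key

lemma Deficient.of_dvd {d n : ℕ} (hd : d ∣ n) (h : Deficient n) : Deficient d := by
  have hn : n ≠ 0 := by rintro rfl; simp [Deficient, sigma1] at h
  have h1 := sigma1_mul_le hd hn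
  have h2 : sigma1 n * d < 2 * n * d := by
    have hd0 : 0 < d := Nat.pos_of_dvd_of_pos hd (Nat.pos_of_ne_zero hn)
    exact (Nat.mul_lt_mul_right hd0).mpr h
  have h3 : sigma1 d * n < 2 * d * n := by
    calc sigma1 d * n ≤ sigma1 n * d := h1
      _ < 2 * n * d := h2
      _ = 2 * d * n := by ring
  exact Nat.lt_of_mul_lt_mul_right h3

lemma key1 {p α k : ℕ} (hp : p.Prime) (hpk : ¬ p ∣ k)
    (hdef : Deficient (p ^ α * k)) :
    ((p : ℚ) * (sigma1 (p ^ α) : ℚ) < center (p ^ α * k)) ↔ Abundant (p ^ α * k * p) := by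
  have hp0 : p ≠ 0 := hp.pos.ne'
  have hcop : Nat.Coprime (p ^ α) k := Nat.Coprime.pow_left _ ((hp.coprime_iff_not_dvd).mpr hpk)
  have hcop' : Nat.Coprime (p ^ (α + 1)) k := Nat.Coprime.pow_left _ ((hp.coprime_iff_not_dvd).mpr hpk)
  have hσm : sigma1 (p ^ α * k) = sigma1 (p ^ α) * sigma1 k := sigma1_mul hcop
  have hσmp : sigma1 (p ^ α * k * p) = (p * sigma1 (p ^ α) + 1) * sigma1 k := by
    rw [show p ^ α * k * p = p ^ (α + 1) * k from by ring, sigma1_mul hcop',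
      sigma1_prime_pow_succ hp]
  have ha : (0 : ℚ) < (sigma1 (p ^ α) : ℚ) := by
    exact_mod_cast sigma1_pos (pow_ne_zero _ hp0)
  have hD : (0 : ℚ) < 2 * ((p ^ α * k : ℕ) : ℚ) - (sigma1 (p ^ α * k) : ℚ) := by
    have : (sigma1 (p ^ α * k) : ℚ) < 2 * ((p ^ α * k : ℕ) : ℚ) := by
      exact_mod_cast hdef
    linarith
  unfold center Abundant
  rw [lt_div_iff₀ hD]
  rw [show (2 * (p ^ α * k * p) < sigma1 (p ^ α * k * p)) ↔
      (((2 * (p ^ α * k * p) : ℕ) : ℚ) < (sigma1 (p ^ α * k * p) : ℚ)) from (Nat.cast_lt).symm]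
  have hSQ : (sigma1 (p ^ α * k) : ℚ) = (sigma1 (p ^ α) : ℚ) * (sigma1 k : ℚ) := by
    exact_mod_cast hσm
  have hMQ : ((p ^ α * k : ℕ) : ℚ) = (p : ℚ) ^ α * (k : ℚ) := by push_cast; ring
  have hMPQ : (sigma1 (p ^ α * k * p) : ℚ) = ((p : ℚ) * (sigma1 (p ^ α) : ℚ) + 1) * (sigma1 k : ℚ) := by
    rw [hσmp]; push_cast; ring
  have h2Q : ((2 * (p ^ α * k * p) : ℕ) : ℚ) = 2 * ((p : ℚ) ^ α * (k : ℚ) * (p : ℚ)) := by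
    push_cast; ring
  rw [hSQ, hMQ, hMPQ, h2Q]
  constructor <;> intro h <;> nlinarith [ha, h]

set_option maxHeartbeats 1000000 in
lemma key2 {p q α β' l : ℕ} (hp : p.Prime) (hq : q.Prime) (hqp : q ≠ p)
    (hpl : ¬ p ∣ l) (hql : ¬ q ∣ l) (hl : l ≠ 0)
    (hdef : Deficient (p ^ α * (q ^ (β' + 1) * l))) :
    ((sigma1 (p ^ α * (q ^ (β' + 1) * l)) : ℚ) /
        ((2 * ((p ^ α * (q ^ (β' + 1) * l) : ℕ) : ℚ) - (sigma1 (p ^ α * (q ^ (β' + 1) * l)) : ℚ)) +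
          2 * ((p ^ α * (q ^ (β' + 1) * l) : ℕ) : ℚ) / ((sigma1 (q ^ (β' + 1)) : ℚ) - 1))
        < (p : ℚ) * (sigma1 (p ^ α) : ℚ))
      ↔ Deficient (p ^ (α + 1) * (q ^ β' * l)) := by
  have hp0 : p ≠ 0 := hp.pos.ne'
  have hq0 : q ≠ 0 := hq.pos.ne'
  have hcpq : Nat.Coprime p q := (Nat.coprime_primes hp hq).mpr (Ne.symm hqp)
  have hcql : Nat.Coprime (q ^ (β' + 1)) l :=
    Nat.Coprime.pow_left _ ((hq.coprime_iff_not_dvd).mpr hql)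
  have hcql' : Nat.Coprime (q ^ β') l :=
    Nat.Coprime.pow_left _ ((hq.coprime_iff_not_dvd).mpr hql)
  have hcp : Nat.Coprime (p ^ α) (q ^ (β' + 1) * l) :=
    Nat.Coprime.pow_left _ (Nat.Coprime.mul_right (hcpq.pow_right _)
      ((hp.coprime_iff_not_dvd).mpr hpl))
  have hcp' : Nat.Coprime (p ^ (α + 1)) (q ^ β' * l) :=
    Nat.Coprime.pow_left _ (Nat.Coprime.mul_right (hcpq.pow_right _)
      ((hp.coprime_iff_not_dvd).mpr hpl))
  have hσm : sigma1 (p ^ α * (q ^ (β' + 1) * l))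
      = sigma1 (p ^ α) * (sigma1 (q ^ (β' + 1)) * sigma1 l) := by
    rw [sigma1_mul hcp, sigma1_mul hcql]
  have hB : sigma1 (q ^ (β' + 1)) = q * sigma1 (q ^ β') + 1 := sigma1_prime_pow_succ hq β'
  have hσd : sigma1 (p ^ (α + 1) * (q ^ β' * l))
      = (p * sigma1 (p ^ α) + 1) * (sigma1 (q ^ β') * sigma1 l) := by
    rw [sigma1_mul hcp', sigma1_mul hcql', sigma1_prime_pow_succ hp]
  have ha : (0 : ℚ) < (sigma1 (p ^ α) : ℚ) := by
    exact_mod_cast sigma1_pos (pow_ne_zero _ hp0)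
  have hb' : (0 : ℚ) < (sigma1 (q ^ β') : ℚ) := by
    exact_mod_cast sigma1_pos (pow_ne_zero _ hq0)
  have hc : (0 : ℚ) < (sigma1 l : ℚ) := by exact_mod_cast sigma1_pos hl
  have hqQ : (0 : ℚ) < (q : ℚ) := by exact_mod_cast hq.pos
  have hpQ : (0 : ℚ) < (p : ℚ) := by exact_mod_cast hp.pos
  have hlQ : (0 : ℚ) < (l : ℚ) := by exact_mod_cast Nat.pos_of_ne_zero hl
  have hSQ : (sigma1 (p ^ α * (q ^ (β' + 1) * l)) : ℚ)
      = (sigma1 (p ^ α) : ℚ) * (((q : ℚ) * (sigma1 (q ^ β') : ℚ) + 1) * (sigma1 l : ℚ)) := by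
    rw [hσm, hB]; push_cast; ring
  have hMQ : ((p ^ α * (q ^ (β' + 1) * l) : ℕ) : ℚ)
      = (p : ℚ) ^ α * ((q : ℚ) ^ (β' + 1) * (l : ℚ)) := by push_cast; ring
  have hBQ : (sigma1 (q ^ (β' + 1)) : ℚ) = (q : ℚ) * (sigma1 (q ^ β') : ℚ) + 1 := by
    rw [hB]; push_cast; ring
  have hdQ : (sigma1 (p ^ (α + 1) * (q ^ β' * l)) : ℚ)
      = ((p : ℚ) * (sigma1 (p ^ α) : ℚ) + 1) * ((sigma1 (q ^ β') : ℚ) * (sigma1 l : ℚ)) := by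
    rw [hσd]; push_cast; ring
  have h2dQ : ((2 * (p ^ (α + 1) * (q ^ β' * l)) : ℕ) : ℚ)
      = 2 * ((p : ℚ) ^ (α + 1) * ((q : ℚ) ^ β' * (l : ℚ))) := by push_cast; ring
  have hDpos : (0 : ℚ) < 2 * ((p ^ α * (q ^ (β' + 1) * l) : ℕ) : ℚ)
      - (sigma1 (p ^ α * (q ^ (β' + 1) * l)) : ℚ) := by
    have : (sigma1 (p ^ α * (q ^ (β' + 1) * l)) : ℚ)
        < 2 * ((p ^ α * (q ^ (β' + 1) * l) : ℕ) : ℚ) := by exact_mod_cast hdef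
    linarith
  rw [show (Deficient (p ^ (α + 1) * (q ^ β' * l))) ↔
      ((sigma1 (p ^ (α + 1) * (q ^ β' * l)) : ℚ)
        < ((2 * (p ^ (α + 1) * (q ^ β' * l)) : ℕ) : ℚ)) from (Nat.cast_lt).symm]
  rw [hdQ, h2dQ]
  set a : ℚ := (sigma1 (p ^ α) : ℚ) with ha_def
  set b : ℚ := (sigma1 (q ^ β') : ℚ) with hb_def
  set c : ℚ := (sigma1 l : ℚ) with hc_def
  set pp : ℚ := (p : ℚ)
  set qq : ℚ := (q : ℚ)
  set ll : ℚ := (l : ℚ)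
  rw [hSQ, hMQ, hBQ]
  have hMpos : (0 : ℚ) < pp ^ α * (qq ^ (β' + 1) * ll) := by positivity
  have hD2 : (0 : ℚ) < 2 * (pp ^ α * (qq ^ (β' + 1) * ll)) - a * ((qq * b + 1) * c) := by
    rw [hSQ, hMQ] at hDpos; exact hDpos
  have hqb : (0 : ℚ) < qq * b := by positivity
  have hden : (0 : ℚ) < (2 * (pp ^ α * (qq ^ (β' + 1) * ll)) - a * ((qq * b + 1) * c))
      + 2 * (pp ^ α * (qq ^ (β' + 1) * ll)) / (qq * b + 1 - 1) := by
    have h1 : (0 : ℚ) < 2 * (pp ^ α * (qq ^ (β' + 1) * ll)) / (qq * b + 1 - 1) := by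
      apply div_pos (by positivity)
      linarith
    linarith
  rw [div_lt_iff₀ hden, ← mul_lt_mul_iff_of_pos_right hqb,
    show (pp * a * ((2 * (pp ^ α * (qq ^ (β' + 1) * ll)) - a * ((qq * b + 1) * c))
        + 2 * (pp ^ α * (qq ^ (β' + 1) * ll)) / (qq * b + 1 - 1))) * (qq * b)
      = pp * a * ((2 * (pp ^ α * (qq ^ (β' + 1) * ll)) - a * ((qq * b + 1) * c)) * (qq * b)
        + 2 * (pp ^ α * (qq ^ (β' + 1) * ll))) from by
      rw [show qq * b + 1 - 1 = qq * b from by ring]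
      field_simp]
  have hkey : pp * a * ((2 * (pp ^ α * (qq ^ (β' + 1) * ll)) - a * ((qq * b + 1) * c)) * (qq * b)
        + 2 * (pp ^ α * (qq ^ (β' + 1) * ll))) - a * ((qq * b + 1) * c) * (qq * b)
      = (2 * (pp ^ (α + 1) * (qq ^ β' * ll)) - (pp * a + 1) * (b * c)) * (qq * a * (qq * b + 1)) := by
    ring
  have hpos2 : (0 : ℚ) < qq * a * (qq * b + 1) := by positivity
  constructor <;> intro h <;> nlinarith [hkey, hpos2, h]

lemma split_lemma {m p α k q β' : ℕ} (hp : p.Prime) (hq : q.Prime) (hqp : q ≠ p)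
    (hm0 : m ≠ 0) (hk : m = p ^ α * k) (hpk : ¬ p ∣ k)
    (hq1 : q ^ (β' + 1) ∣ m) (hq2 : ¬ q ^ (β' + 1 + 1) ∣ m) :
    ∃ l, m = p ^ α * (q ^ (β' + 1) * l) ∧ k = q ^ (β' + 1) * l ∧ ¬ q ∣ l ∧ ¬ p ∣ l ∧ l ≠ 0 := by
  have hcqp : Nat.Coprime (q ^ (β' + 1)) (p ^ α) :=
    Nat.Coprime.pow _ _ ((Nat.coprime_primes hq hp).mpr hqp)
  have hdk : q ^ (β' + 1) ∣ k := by
    apply hcqp.dvd_of_dvd_mul_left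
    rw [hk] at hq1
    exact hq1
  obtain ⟨l, hl⟩ := hdk
  refine ⟨l, by rw [hk, hl], hl, ?_, ?_, ?_⟩
  · intro hd
    apply hq2
    rw [hk, hl]
    exact Dvd.dvd.mul_left (by rw [pow_succ]; exact mul_dvd_mul_left _ hd) (p ^ α)
  · intro hd
    apply hpk
    rw [hl]
    exact hd.mul_left _
  · rintro rfl
    apply hm0
    rw [hk, hl, mul_zero, mul_zero]

/-- If `m` is deficient and `p^α ∣∣ m` with `α ≥ 1`, then `m·p` is primitive
abundant iff `p·σ(p^α) < c(m)` and `p·σ(p^α) > σ(m)/(d(m) + 2m/(σ(q^β) − 1))`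
for each `q^β ∣∣ m` with `q ≠ p`. -/
theorem stmt11 (m p α : ℕ) (hm : 1 ≤ m) (hdef : Deficient m)
    (hp : p.Prime) (hα : 1 ≤ α) (hdvd : p ^ α ∣ m) (hndvd : ¬ p ^ (α + 1) ∣ m) :
    PrimitiveAbundant (m * p) ↔
      ((p : ℚ) * (sigma1 (p ^ α) : ℚ) < center m ∧
       ∀ q β : ℕ, q.Prime → q ≠ p → 1 ≤ β → q ^ β ∣ m → ¬ q ^ (β + 1) ∣ m →
         (sigma1 m : ℚ) /
             ((2 * (m : ℚ) - (sigma1 m : ℚ)) + 2 * (m : ℚ) / ((sigma1 (q ^ β) : ℚ) - 1))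
           < (p : ℚ) * (sigma1 (p ^ α) : ℚ)) := by
  have hm0 : m ≠ 0 := by omega
  obtain ⟨k, hk⟩ := hdvd
  have hpk : ¬ p ∣ k := by
    intro h
    exact hndvd (by rw [hk, pow_succ]; exact mul_dvd_mul_left _ h)
  have hk0 : k ≠ 0 := by rintro rfl; rw [mul_zero] at hk; exact hm0 hk
  have hiff1 : ((p : ℚ) * (sigma1 (p ^ α) : ℚ) < center m) ↔ Abundant (m * p) := by
    rw [hk]
    exact key1 hp hpk (by rw [← hk]; exact hdef)
  constructor
  · rintro ⟨hab, hprop⟩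
    refine ⟨hiff1.mpr hab, ?_⟩
    intro q β hq hqp hβ hq1 hq2
    obtain ⟨β', rfl⟩ : ∃ β', β = β' + 1 := ⟨β - 1, (Nat.succ_pred_eq_of_pos hβ).symm⟩
    obtain ⟨l, hm', hkl, hql, hpl, hl0⟩ := split_lemma hp hq hqp hm0 hk hpk hq1 hq2
    have hdef' : Deficient (p ^ α * (q ^ (β' + 1) * l)) := by rw [← hm']; exact hdef
    have hd0 : Deficient (p ^ (α + 1) * (q ^ β' * l)) := by
      apply hprop
      rw [Nat.mem_properDivisors]
      have heq : p ^ (α + 1) * (q ^ β' * l) * q = m * p := by rw [hm']; ring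
      constructor
      · exact ⟨q, heq.symm⟩
      · have hpos : 0 < p ^ (α + 1) * (q ^ β' * l) :=
          Nat.mul_pos (Nat.pow_pos hp.pos)
            (Nat.mul_pos (Nat.pow_pos hq.pos) (Nat.pos_of_ne_zero hl0))
        calc p ^ (α + 1) * (q ^ β' * l)
            < p ^ (α + 1) * (q ^ β' * l) * q := by
              have := hq.two_le
              nlinarith
          _ = m * p := heq
    rw [hm']
    exact (key2 hp hq hqp hpl hql hl0 hdef').mpr hd0
  · rintro ⟨h1, h2⟩
    refine ⟨hiff1.mp h1, ?_⟩
    intro d hd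
    rw [Nat.mem_properDivisors] at hd
    obtain ⟨hdd, hdlt⟩ := hd
    have hmp : m * p = p ^ (α + 1) * k := by rw [hk]; ring
    have hmp0 : m * p ≠ 0 := Nat.mul_ne_zero hm0 hp.pos.ne'
    have hd0 : d ≠ 0 := by rintro rfl; exact hmp0 (zero_dvd_iff.mp hdd)
    by_cases hcase : p ^ (α + 1) ∣ d
    · obtain ⟨e, rfl⟩ := hcase
      have hpow0 : 0 < p ^ (α + 1) := Nat.pow_pos hp.pos
      have hek : e ∣ k := by
        have h3 : p ^ (α + 1) * e ∣ p ^ (α + 1) * k := by rw [← hmp]; exact hdd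
        exact (Nat.mul_dvd_mul_iff_left hpow0).mp h3
      have hek' : e ≠ k := by rintro rfl; rw [hmp] at hdlt; exact lt_irrefl _ hdlt
      have he0 : e ≠ 0 := by rintro rfl; exact hd0 (mul_zero _)
      have helt : e < k := lt_of_le_of_ne (Nat.le_of_dvd (Nat.pos_of_ne_zero hk0) hek) hek'
      have hkediv : k / e * e = k := Nat.div_mul_cancel hek
      have hke1 : k / e ≠ 1 := by intro h1; rw [h1, one_mul] at hkediv; omega
      set q := (k / e).minFac with hq_def
      have hqprime : q.Prime := Nat.minFac_prime hke1
      have hqke : q ∣ k / e := Nat.minFac_dvd _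
      have heqk : e * q ∣ k := by
        have h1 : k = e * (k / e) := (Nat.mul_div_cancel' hek).symm
        rw [h1]
        exact mul_dvd_mul_left e hqke
      have hqk : q ∣ k := dvd_trans (dvd_mul_left q e) heqk
      have hqp' : q ≠ p := by rintro rfl; exact hpk hqk
      have hkm : k ∣ m := ⟨p ^ α, by rw [hk]; ring⟩
      set β := m.factorization q with hβ_def
      have hq1 : q ^ β ∣ m := Nat.ordProj_dvd m q
      have hq2' : ¬ q ^ (β + 1) ∣ m := Nat.pow_succ_factorization_not_dvd hm0 hqprime
      have hβpos : 1 ≤ β :=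
        Nat.Prime.factorization_pos_of_dvd hqprime hm0 (hqk.trans hkm)
      obtain ⟨β', hββ'⟩ : ∃ β', β = β' + 1 := ⟨β - 1, (Nat.succ_pred_eq_of_pos hβpos).symm⟩
      rw [hββ'] at hq1 hq2'
      obtain ⟨l, hm', hkl, hql, hpl, hl0⟩ := split_lemma hp hqprime hqp' hm0 hk hpk hq1 hq2'
      have hdef' : Deficient (p ^ α * (q ^ (β' + 1) * l)) := by rw [← hm']; exact hdef
      have hineq := h2 q (β' + 1) hqprime hqp' (by omega) hq1 hq2'
      rw [hm'] at hineq
      have hd0def : Deficient (p ^ (α + 1) * (q ^ β' * l)) :=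
        (key2 hp hqprime hqp' hpl hql hl0 hdef').mp hineq
      have hel : e ∣ q ^ β' * l := by
        have h1 : e * q ∣ (q ^ β' * l) * q := by
          rw [show (q ^ β' * l) * q = q ^ (β' + 1) * l from by ring, ← hkl]
          exact heqk
        exact (Nat.mul_dvd_mul_iff_right hqprime.pos).mp h1
      exact Deficient.of_dvd (mul_dvd_mul_left _ hel) hd0def
    · have hγ : d.factorization p ≤ α := by
        by_contra hcon
        push_neg at hcon
        exact hcase ((pow_dvd_pow p hcon).trans (Nat.ordProj_dvd d p))
      have hord : ¬ p ∣ d / p ^ d.factorization p := Nat.not_dvd_ordCompl hp hd0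
      have hedvd : (d / p ^ d.factorization p) ∣ k := by
        have h3 : (d / p ^ d.factorization p) ∣ m * p :=
          dvd_trans (Nat.ordCompl_dvd d p) hdd
        rw [hmp, mul_comm] at h3
        exact (((hp.coprime_iff_not_dvd).mpr hord).symm.pow_right (α + 1)).dvd_of_dvd_mul_right h3
      have hdm : d ∣ m := by
        have h4 : p ^ d.factorization p * (d / p ^ d.factorization p) ∣ p ^ α * k :=
          mul_dvd_mul (pow_dvd_pow p hγ) hedvd
        rw [Nat.ordProj_mul_ordCompl_eq_self, ← hk] at h4
        exact h4
      exact Deficient.of_dvd hdm hdef
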